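/- arXiv:2110.10168 — 4 statements merged into one kernel-verified Lean document; each statement's English description precedes it below -/
import Mathlib

section
/- For all τ ∈ (0,1) and η ∈ (0,1), the first-order large-N expansion C_τ(η,N) ≃ −log₂(1−τ) + τ·log₂(η)/((1−τ)·N) holds in the precise sense that N·(C_τ(η,N) + log₂(1−τ)) converges to τ·log₂(η)/(1−τ) as N → ∞. -/
/-- The lossy-repeater capacity `C_τ(η,N) = -log₂(1 - τ·η^(1/N))` of a chain of
`N-1` identical lossy repeaters (node transmissivity `τ`) splitting a fibre of total
transmissivity `η` into `N` equal pure-loss links. -/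
noncomputable def lossyCap (τ η : ℝ) (N : ℕ) : ℝ :=
  -Real.logb 2 (1 - τ * η ^ (1 / (N : ℝ)))

/-- First-order large-`N` expansion
`C_τ(η,N) ≃ -log₂(1-τ) + τ·log₂(η)/((1-τ)·N)`, in the precise sense that
`N·(C_τ(η,N) + log₂(1-τ))` converges to `τ·log₂(η)/(1-τ)` as `N → ∞`. -/
theorem lossyCap_firstOrder_expansion (τ η : ℝ)
    (hτ0 : 0 < τ) (hτ1 : τ < 1) (hη0 : 0 < η) (hη1 : η < 1) :
    Filter.Tendsto
      (fun N : ℕ => (N : ℝ) * (lossyCap τ η N + Real.logb 2 (1 - τ)))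
      Filter.atTop
      (nhds (τ * Real.logb 2 η / (1 - τ))) := by
  have h1τ : (0:ℝ) < 1 - τ := by linarith
  have hlog2 : Real.log 2 ≠ 0 := by
    have := Real.log_pos (by norm_num : (1:ℝ) < 2); linarith
  set F : ℝ → ℝ := fun x => -Real.logb 2 (1 - τ * η ^ x) with hFdef
  have hF0 : F 0 = -Real.logb 2 (1 - τ) := by simp [hFdef]
  -- derivative of F at 0
  have hrpow : HasDerivAt (fun x : ℝ => η ^ x) (Real.log η) 0 := by
    have h := (Real.hasStrictDerivAt_const_rpow hη0 0).hasDerivAt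
    simpa using h
  have hinner : HasDerivAt (fun x : ℝ => 1 - τ * η ^ x) (-(τ * Real.log η)) 0 := by
    simpa using ((hrpow.const_mul τ).const_sub 1)
  have hne : 1 - τ * η ^ (0:ℝ) ≠ 0 := by
    rw [Real.rpow_zero]; simp; linarith
  have hF' : HasDerivAt F (τ * Real.logb 2 η / (1 - τ)) 0 := by
    have h := ((hinner.log hne).div_const (Real.log 2)).neg
    have heq : F = fun x => -(Real.log (1 - τ * η ^ x) / Real.log 2) := by
      funext x; simp [hFdef, Real.logb]
    rw [heq]
    convert h using 1
    · rfl
    · rfl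
    · rfl
    rw [Real.rpow_zero]
    simp only [Real.logb]
    field_simp
  have hslope := hasDerivAt_iff_tendsto_slope.mp hF'
  have htend : Filter.Tendsto (fun N : ℕ => 1 / (N : ℝ)) Filter.atTop (nhdsWithin 0 {0}ᶜ) := by
    rw [tendsto_nhdsWithin_iff]
    refine ⟨tendsto_one_div_atTop_nhds_zero_nat, ?_⟩
    filter_upwards [Filter.eventually_atTop.mpr ⟨1, fun n hn => hn⟩] with n hn
    have : (0:ℝ) < n := by exact_mod_cast hn
    simp [Set.mem_compl_iff]
    positivity
  have hcomp := hslope.comp htend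
  refine hcomp.congr fun N => ?_
  simp only [Function.comp_apply, slope_def_field, div_sub_div_same]
  rw [hF0]
  have : F (1 / (N : ℝ)) = lossyCap τ η N := rfl
  rw [this, sub_zero, sub_neg_eq_add, div_eq_mul_inv, one_div, inv_inv]
  ring
end

section
/- For all τ ∈ (0,1), η ∈ (0,1) and every integer N ≥ 1, the first-order expansion is in fact a lower bound: C_τ(η,N) ≥ −log₂(1−τ) + τ·log₂(η)/((1−τ)·N). -/
/-- For all `τ ∈ (0,1)`, `η ∈ (0,1)` and every integer `N ≥ 1`, the first-order
expansion is a lower bound: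
`C_τ(η,N) ≥ -log₂(1-τ) + τ·log₂(η)/((1-τ)·N)`. -/
theorem lossyCap_ge_firstOrder (τ η : ℝ)
    (hτ0 : 0 < τ) (hτ1 : τ < 1) (hη0 : 0 < η) (hη1 : η < 1)
    (N : ℕ) (hN : 1 ≤ N) :
    -Real.logb 2 (1 - τ) + τ * Real.logb 2 η / ((1 - τ) * N) ≤ lossyCap τ η N := by
  have hN0 : (0:ℝ) < N := by exact_mod_cast hN
  set s : ℝ := 1 / (N:ℝ) with hs
  have hs0 : 0 < s := by positivity
  set a : ℝ := η ^ s with ha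
  have ha0 : 0 < a := Real.rpow_pos_of_pos hη0 s
  have ha1 : a < 1 := Real.rpow_lt_one hη0.le hη1 hs0
  have h1 : 0 < 1 - τ := by linarith
  have h2 : 0 < 1 - τ * a := by nlinarith
  have hlog2 : 0 < Real.log 2 := Real.log_pos (by norm_num)
  -- exp bound: s * log η + 1 ≤ a
  have hexp : Real.log η * s + 1 ≤ a := by
    have h := Real.add_one_le_exp (Real.log η * s)
    rwa [ha, Real.rpow_def_of_pos hη0]
  -- log bound: log((1-τa)/(1-τ)) ≤ (1-τa)/(1-τ) - 1
  have hA : Real.log (1 - τ * a) - Real.log (1 - τ) ≤ (1 - τ * a) / (1 - τ) - 1 := by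
    have h := Real.log_le_sub_one_of_pos (show (0:ℝ) < (1 - τ * a) / (1 - τ) by positivity)
    rwa [Real.log_div h2.ne' h1.ne'] at h
  -- key inequality at the level of natural logs
  have key : τ * Real.log η * s / (1 - τ) ≤ Real.log (1 - τ) - Real.log (1 - τ * a) := by
    have h4 : τ * Real.log η * s ≤ τ * a - τ := by nlinarith
    have hA2 := mul_le_mul_of_nonneg_right hA h1.le
    rw [sub_mul, sub_mul, div_mul_cancel₀ _ h1.ne', one_mul] at hA2
    rw [div_le_iff₀ h1]
    nlinarith [hA2, h4]
  -- convert to logb 2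
  have hNs : (N:ℝ) = 1 / s := by
    rw [hs]; field_simp
  rw [lossyCap, Real.logb, Real.logb, Real.logb,
    show (1:ℝ) / (N:ℝ) = s from rfl, show η ^ s = a from rfl]
  have heq : τ * (Real.log η / Real.log 2) / ((1 - τ) * N)
      = (τ * Real.log η * s / (1 - τ)) / Real.log 2 := by
    rw [hNs]; field_simp
  rw [heq, ← neg_div, ← neg_div, ← add_div]
  gcongr
  linarith [key]
end

section
/- Let M₁ and M₂ be independent geometric random variables with success probability p ∈ (0,1], i.e. P(Mᵢ = k) = p·(1−p)^(k−1) for integers k ≥ 1, and let x ∈ [0,1). Then E[x^|M₁−M₂|] = (p/(2−p))·(2/(1 − x·(1−p)) − 1) = (p/(2−p))·(1 + x·(1−p))/(1 − x·(1−p)). With x = e^(−T₀/t_c) and decaying memory transmissivity τ_mem(t) = e^(−t/t_c), this is the node-receives-photons (NRP) mean memory transmissivity. -/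
/-- Probability mass function of a geometric random variable counting attempts until
first success: `P(M = k) = p·(1-p)^(k-1)` for integers `k ≥ 1`, and `0` otherwise. -/
noncomputable def geomPMF (p : ℝ) (k : ℕ) : ℝ :=
  if 1 ≤ k then p * (1 - p) ^ (k - 1) else 0

/-- For independent geometric random variables `M₁, M₂` with success probability
`p ∈ (0,1]` and `x ∈ [0,1)`,
`E[x^|M₁-M₂|] = (p/(2-p))·(2/(1 - x·(1-p)) - 1) = (p/(2-p))·(1 + x·(1-p))/(1 - x·(1-p))`.
With `x = e^(-T₀/t_c)` this is the node-receives-photons (NRP) mean memory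
transmissivity. -/
theorem geometric_difference_expectation_NRP (p : ℝ) (hp0 : 0 < p) (hp1 : p ≤ 1)
    (x : ℝ) (hx0 : 0 ≤ x) (hx1 : x < 1) :
    (∑' k : ℕ, ∑' l : ℕ,
        geomPMF p k * geomPMF p l * x ^ ((k : ℤ) - (l : ℤ)).natAbs)
      = (p / (2 - p)) * (2 / (1 - x * (1 - p)) - 1)
    ∧ (∑' k : ℕ, ∑' l : ℕ,
        geomPMF p k * geomPMF p l * x ^ ((k : ℤ) - (l : ℤ)).natAbs)
      = (p / (2 - p)) * (1 + x * (1 - p)) / (1 - x * (1 - p)) := by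
  set q : ℝ := 1 - p with hq
  set y : ℝ := x * q with hyd
  have hq0 : 0 ≤ q := by rw [hq]; linarith
  have hq1 : q < 1 := by rw [hq]; linarith
  have hy0 : 0 ≤ y := mul_nonneg hx0 hq0
  have hy1 : y < 1 := by
    have : y ≤ q := by rw [hyd]; nlinarith
    linarith
  have hy1' : 0 < 1 - y := by linarith
  have hq2 : (0:ℝ) ≤ q ^ 2 := sq_nonneg q
  have hq2' : q ^ 2 < 1 := by nlinarith
  have h1q2 : 0 < 1 - q ^ 2 := by linarith
  have hgeom : ∀ m : ℕ, geomPMF p (m + 1) = p * q ^ m := by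
    intro m; simp [geomPMF, hq]
  have hgeom0 : geomPMF p 0 = 0 := by simp [geomPMF]
  -- inner sum
  have inner : ∀ k : ℕ,
      (∑' l : ℕ, geomPMF p l * x ^ (((k + 1 : ℕ) : ℤ) - (l : ℤ)).natAbs)
        = p * (∑ m ∈ Finset.range (k + 1), q ^ m * x ^ (k - m))
          + p * q ^ k * (y / (1 - y)) := by
    intro k
    set f : ℕ → ℝ := fun l => geomPMF p l * x ^ (((k + 1 : ℕ) : ℤ) - (l : ℤ)).natAbs with hf
    have htail : ∀ j : ℕ, f (j + (k + 2)) = (p * q ^ (k + 1) * x) * y ^ j := by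
      intro j
      have hna : ((((k + 1 : ℕ)) : ℤ) - ((j + (k + 2) : ℕ) : ℤ)).natAbs = j + 1 := by omega
      simp only [hf]
      rw [hna, show j + (k + 2) = (j + (k + 1)) + 1 from by omega, hgeom,
        hyd, mul_pow, pow_add, pow_succ]
      ring
    have hts : Summable (fun j : ℕ => (p * q ^ (k + 1) * x) * y ^ j) :=
      (summable_geometric_of_lt_one hy0 hy1).mul_left _
    have hsf : Summable f := by
      rw [← summable_nat_add_iff (k + 2)]
      exact hts.congr fun j => (htail j).symm
    have hsplit := (hsf.sum_add_tsum_nat_add (k + 2)).symm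
    have htv : (∑' j : ℕ, f (j + (k + 2))) = p * q ^ k * (y / (1 - y)) := by
      rw [tsum_congr htail, tsum_mul_left, tsum_geometric_of_lt_one hy0 hy1]
      rw [hyd, pow_succ]
      field_simp
    have hfin : (∑ l ∈ Finset.range (k + 2), f l)
        = p * (∑ m ∈ Finset.range (k + 1), q ^ m * x ^ (k - m)) := by
      rw [Finset.sum_range_succ']
      have h0 : f 0 = 0 := by rw [hf]; simp [hgeom0]
      rw [h0, add_zero, Finset.mul_sum]
      refine Finset.sum_congr rfl fun m hm => ?_
      have hm' : m ≤ k := Nat.lt_succ_iff.mp (Finset.mem_range.mp hm)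
      have hna : ((((k + 1 : ℕ)) : ℤ) - ((m + 1 : ℕ) : ℤ)).natAbs = k - m := by omega
      rw [hf]
      simp only [hgeom, hna]
      ring
    rw [hsplit, hfin, htv]
  -- rewrite the double sum
  have step1 : (∑' k : ℕ, ∑' l : ℕ,
      geomPMF p k * geomPMF p l * x ^ ((k : ℤ) - (l : ℤ)).natAbs)
      = ∑' k : ℕ, geomPMF p k * ∑' l : ℕ, geomPMF p l * x ^ ((k : ℤ) - (l : ℤ)).natAbs := by
    refine tsum_congr fun k => ?_
    rw [← tsum_mul_left]
    exact tsum_congr fun l => by ring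
  set F : ℕ → ℝ := fun k =>
    geomPMF p k * ∑' l : ℕ, geomPMF p l * x ^ ((k : ℤ) - (l : ℤ)).natAbs with hF
  set A : ℕ → ℝ := fun k =>
    p ^ 2 * ∑ m ∈ Finset.range (k + 1), (q ^ 2) ^ m * y ^ (k - m) with hA
  set C : ℕ → ℝ := fun k => p ^ 2 * (y / (1 - y)) * (q ^ 2) ^ k with hC
  have hF0 : F 0 = 0 := by rw [hF]; simp [hgeom0]
  have hFsucc : ∀ k : ℕ, F (k + 1) = A k + C k := by
    intro k
    have hstep : F (k + 1) = p * q ^ k *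
        (p * (∑ m ∈ Finset.range (k + 1), q ^ m * x ^ (k - m)) + p * q ^ k * (y / (1 - y))) := by
      simp only [hF]
      rw [hgeom, inner k]
    rw [hstep, hA, hC]
    simp only
    rw [mul_add, Finset.mul_sum, Finset.mul_sum, Finset.mul_sum]
    congr 1
    · refine Finset.sum_congr rfl fun m hm => ?_
      have hm' : m ≤ k := Nat.lt_succ_iff.mp (Finset.mem_range.mp hm)
      obtain ⟨j, hj⟩ : ∃ j, k = m + j := ⟨k - m, by omega⟩
      have hj2 : k - m = j := by omega
      rw [hj2, hj, pow_add, hyd, mul_pow, ← pow_mul]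
      ring
    · rw [← pow_mul]
      ring
  -- summability
  have hnq : Summable fun m : ℕ => ‖(q ^ 2) ^ m‖ := by
    simpa [Real.norm_eq_abs, abs_pow, abs_of_nonneg hq0] using
      summable_geometric_of_lt_one hq2 hq2'
  have hny : Summable fun m : ℕ => ‖y ^ m‖ := by
    simpa [Real.norm_eq_abs, abs_of_nonneg hy0] using
      summable_geometric_of_lt_one hy0 hy1
  have hsA : Summable A := by
    have := (summable_norm_sum_mul_range_of_summable_norm hnq hny).of_norm
    exact (this.mul_left (p ^ 2)).congr fun k => by rw [hA]
  have hsC : Summable C :=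
    ((summable_geometric_of_lt_one hq2 hq2').mul_left _).congr fun k => by rw [hC]
  have hsF : Summable F := by
    rw [← summable_nat_add_iff 1]
    exact (hsA.add hsC).congr fun k => (hFsucc k).symm
  have hAval : (∑' k : ℕ, A k) = p ^ 2 * ((1 - q ^ 2)⁻¹ * (1 - y)⁻¹) := by
    have hcp := tsum_mul_tsum_eq_tsum_sum_range_of_summable_norm hnq hny
    rw [tsum_geometric_of_lt_one hq2 hq2', tsum_geometric_of_lt_one hy0 hy1] at hcp
    calc (∑' k : ℕ, A k)
        = p ^ 2 * ∑' k : ℕ, ∑ m ∈ Finset.range (k + 1), (q ^ 2) ^ m * y ^ (k - m) := by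
          rw [← tsum_mul_left]
      _ = p ^ 2 * ((1 - q ^ 2)⁻¹ * (1 - y)⁻¹) := by rw [← hcp]
  have hCval : (∑' k : ℕ, C k) = p ^ 2 * (y / (1 - y)) * (1 - q ^ 2)⁻¹ := by
    rw [hC, tsum_mul_left, tsum_geometric_of_lt_one hq2 hq2']
  have hSval : (∑' k : ℕ, F k)
      = p ^ 2 * ((1 - q ^ 2)⁻¹ * (1 - y)⁻¹) + p ^ 2 * (y / (1 - y)) * (1 - q ^ 2)⁻¹ := by
    rw [hsF.tsum_eq_zero_add, hF0, zero_add, tsum_congr hFsucc,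
      hsA.tsum_add hsC, hAval, hCval]
  have h1q2' : 1 - q ^ 2 = p * (2 - p) := by rw [hq]; ring
  have h2p : (0:ℝ) < 2 - p := by linarith
  have key : (∑' k : ℕ, ∑' l : ℕ,
      geomPMF p k * geomPMF p l * x ^ ((k : ℤ) - (l : ℤ)).natAbs)
      = p * (1 + y) / ((2 - p) * (1 - y)) := by
    have h2p' : (2:ℝ) - p ≠ 0 := by linarith
    have hyne : (1:ℝ) - y ≠ 0 := ne_of_gt hy1'
    rw [step1, hSval, h1q2']
    field_simp
  have h2p' : (2:ℝ) - p ≠ 0 := by linarith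
  have hyne : (1:ℝ) - y ≠ 0 := ne_of_gt hy1'
  constructor
  · rw [key, div_eq_iff (by positivity : ((2:ℝ) - p) * (1 - y) ≠ 0)]
    field_simp
    ring
  · rw [key, div_eq_iff (by positivity : ((2:ℝ) - p) * (1 - y) ≠ 0)]
    field_simp
end

section
/- Let M₁ and M₂ be independent geometric random variables with success probability p ∈ (0,1], i.e. P(Mᵢ = k) = p·(1−p)^(k−1) for integers k ≥ 1, and let x ∈ [0,1). Then E[x^(|M₁−M₂|+2)] = (p/(2−p))·x²·(1 + x·(1−p))/(1 − x·(1−p)). With x = e^(−T₀/t_c) this equals (p/(2−p))·e^(−2T₀/t_c)·((1−p) + e^(T₀/t_c))/(e^(T₀/t_c) − (1−p)), the node-sends-photons (NSP) mean memory transmissivity. -/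
noncomputable def nspF (p x : ℝ) : ℕ × ℕ → ℝ := fun kl =>
  geomPMF p kl.1 * geomPMF p kl.2 * x ^ (((kl.1 : ℤ) - (kl.2 : ℤ)).natAbs + 2)

noncomputable def nspF1 (p x : ℝ) : ℕ × ℕ → ℝ := fun kl =>
  if kl.2 ≤ kl.1 then nspF p x kl else 0

noncomputable def nspF2 (p x : ℝ) : ℕ × ℕ → ℝ := fun kl =>
  if kl.2 ≤ kl.1 then 0 else nspF p x kl

lemma geomPMF_nonneg {p : ℝ} (hp0 : 0 ≤ p) (hp1 : p ≤ 1) (k : ℕ) : 0 ≤ geomPMF p k := by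
  unfold geomPMF
  split
  · have h : (0:ℝ) ≤ 1 - p := by linarith
    positivity
  · exact le_refl 0

lemma geomPMF_succ (p : ℝ) (n : ℕ) : geomPMF p (n + 1) = p * (1 - p) ^ n := by
  simp [geomPMF]

lemma summable_geomPMF {p : ℝ} (hp0 : 0 < p) (hp1 : p ≤ 1) : Summable (geomPMF p) := by
  rw [← summable_nat_add_iff 1]
  simp only [geomPMF_succ]
  exact (summable_geometric_of_lt_one (by linarith) (by linarith)).mul_left p

lemma tsum_prod_two_geom {A B : ℝ} (hA0 : 0 ≤ A) (hA1 : A < 1) (hB0 : 0 ≤ B) (hB1 : B < 1) :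
    ∑' bd : ℕ × ℕ, A ^ bd.1 * B ^ bd.2 = (1 - A)⁻¹ * (1 - B)⁻¹ := by
  have hA : Summable fun n : ℕ => ‖A ^ n‖ := by
    simpa [abs_of_nonneg hA0, abs_pow] using summable_geometric_of_lt_one hA0 hA1
  have hB : Summable fun n : ℕ => ‖B ^ n‖ := by
    simpa [abs_of_nonneg hB0, abs_pow] using summable_geometric_of_lt_one hB0 hB1
  rw [← tsum_mul_tsum_of_summable_norm hA hB, tsum_geometric_of_lt_one hA0 hA1,
    tsum_geometric_of_lt_one hB0 hB1]

lemma nspF_nonneg {p : ℝ} (hp0 : 0 < p) (hp1 : p ≤ 1) {x : ℝ} (hx0 : 0 ≤ x)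
    (kl : ℕ × ℕ) : 0 ≤ nspF p x kl :=
  mul_nonneg (mul_nonneg (geomPMF_nonneg hp0.le hp1 _) (geomPMF_nonneg hp0.le hp1 _))
    (pow_nonneg hx0 _)

lemma summable_nspF {p : ℝ} (hp0 : 0 < p) (hp1 : p ≤ 1) {x : ℝ} (hx0 : 0 ≤ x) (hx1 : x < 1) :
    Summable (nspF p x) := by
  have hgs := summable_geomPMF hp0 hp1
  have hGsum : Summable fun kl : ℕ × ℕ => geomPMF p kl.1 * geomPMF p kl.2 :=
    hgs.mul_of_nonneg hgs (geomPMF_nonneg hp0.le hp1) (geomPMF_nonneg hp0.le hp1)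
  apply Summable.of_nonneg_of_le (nspF_nonneg hp0 hp1 hx0) _ hGsum
  intro kl
  have h1 : x ^ (((kl.1 : ℤ) - (kl.2 : ℤ)).natAbs + 2) ≤ 1 := pow_le_one₀ hx0 hx1.le
  have h2 : 0 ≤ geomPMF p kl.1 * geomPMF p kl.2 :=
    mul_nonneg (geomPMF_nonneg hp0.le hp1 _) (geomPMF_nonneg hp0.le hp1 _)
  calc nspF p x kl ≤ geomPMF p kl.1 * geomPMF p kl.2 * 1 := mul_le_mul_of_nonneg_left h1 h2
    _ = _ := mul_one _

lemma nspF1_eq (p x : ℝ) (b d : ℕ) :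
    nspF1 p x (b + 1 + d, b + 1)
      = p ^ 2 * x ^ 2 * (((1 - p) ^ 2) ^ b * ((1 - p) * x) ^ d) := by
  have hd : (((b + 1 + d : ℕ) : ℤ) - ((b + 1 : ℕ) : ℤ)).natAbs = d := by omega
  have e1 : geomPMF p (b + 1 + d) = p * (1 - p) ^ (b + d) := by
    rw [show b + 1 + d = b + d + 1 from by omega, geomPMF_succ]
  simp only [nspF1, nspF, hd, if_pos (by omega : b + 1 ≤ b + 1 + d)]
  rw [e1, geomPMF_succ, ← pow_mul, mul_pow]
  ring

lemma nspF2_eq (p x : ℝ) (b d : ℕ) :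
    nspF2 p x (b + 1, b + 2 + d)
      = p ^ 2 * x ^ 3 * (1 - p) * (((1 - p) ^ 2) ^ b * ((1 - p) * x) ^ d) := by
  have hd : (((b + 1 : ℕ) : ℤ) - ((b + 2 + d : ℕ) : ℤ)).natAbs = d + 1 := by omega
  have e1 : geomPMF p (b + 2 + d) = p * (1 - p) ^ (b + 1 + d) := by
    rw [show b + 2 + d = b + 1 + d + 1 from by omega, geomPMF_succ]
  simp only [nspF2, nspF, hd, if_neg (by omega : ¬ b + 2 + d ≤ b + 1)]
  rw [e1, geomPMF_succ, ← pow_mul, mul_pow]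
  ring

lemma geom_diff_main (p : ℝ) (hp0 : 0 < p) (hp1 : p ≤ 1)
    (x : ℝ) (hx0 : 0 ≤ x) (hx1 : x < 1) :
    (∑' k : ℕ, ∑' l : ℕ,
        geomPMF p k * geomPMF p l * x ^ (((k : ℤ) - (l : ℤ)).natAbs + 2))
      = (p / (2 - p)) * x ^ 2 * (1 + x * (1 - p)) / (1 - x * (1 - p)) := by
  have hq0 : (0:ℝ) ≤ 1 - p := by linarith
  have hq1 : 1 - p < 1 := by linarith
  have hqx0 : 0 ≤ (1 - p) * x := mul_nonneg hq0 hx0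
  have hqx1 : (1 - p) * x < 1 := by nlinarith
  have hq20 : (0:ℝ) ≤ (1 - p) ^ 2 := sq_nonneg _
  have hq21 : (1 - p) ^ 2 < 1 := by nlinarith
  have hfs := summable_nspF hp0 hp1 hx0 hx1
  have hin : ∀ k : ℕ, Summable fun l : ℕ => nspF p x (k, l) := by
    intro k
    apply Summable.of_nonneg_of_le (fun l => nspF_nonneg hp0 hp1 hx0 (k, l))
      _ ((summable_geomPMF hp0 hp1).mul_left (geomPMF p k))
    intro l
    have h1 : x ^ (((k : ℤ) - (l : ℤ)).natAbs + 2) ≤ 1 := pow_le_one₀ hx0 hx1.le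
    have h2 : 0 ≤ geomPMF p k * geomPMF p l :=
      mul_nonneg (geomPMF_nonneg hp0.le hp1 _) (geomPMF_nonneg hp0.le hp1 _)
    calc nspF p x (k, l) ≤ geomPMF p k * geomPMF p l * 1 := mul_le_mul_of_nonneg_left h1 h2
      _ = _ := mul_one _
  have h1 : (∑' k : ℕ, ∑' l : ℕ,
      geomPMF p k * geomPMF p l * x ^ (((k : ℤ) - (l : ℤ)).natAbs + 2))
      = ∑' kl, nspF p x kl := (Summable.tsum_prod' hfs hin).symm
  rw [h1]
  -- split
  have hs₁ : Summable (nspF1 p x) := by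
    apply Summable.of_nonneg_of_le _ _ hfs <;> intro kl <;> simp only [nspF1] <;> split
    · exact nspF_nonneg hp0 hp1 hx0 kl
    · exact le_refl 0
    · exact le_refl _
    · exact nspF_nonneg hp0 hp1 hx0 kl
  have hs₂ : Summable (nspF2 p x) := by
    apply Summable.of_nonneg_of_le _ _ hfs <;> intro kl <;> simp only [nspF2] <;> split
    · exact le_refl 0
    · exact nspF_nonneg hp0 hp1 hx0 kl
    · exact nspF_nonneg hp0 hp1 hx0 kl
    · exact le_refl _
  have htot : ∑' kl, nspF p x kl = (∑' kl, nspF1 p x kl) + ∑' kl, nspF2 p x kl := by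
    rw [← Summable.tsum_add hs₁ hs₂]
    apply tsum_congr
    intro kl
    simp only [nspF1, nspF2, Pi.add_apply]
    split <;> ring
  have hsum₁ : ∑' kl, nspF1 p x kl
      = p ^ 2 * x ^ 2 * ((1 - (1 - p) ^ 2)⁻¹ * (1 - (1 - p) * x)⁻¹) := by
    have hb := tsum_eq_tsum_of_ne_zero_bij (f := nspF1 p x)
      (g := fun bd : ℕ × ℕ => p ^ 2 * x ^ 2 * (((1 - p) ^ 2) ^ bd.1 * ((1 - p) * x) ^ bd.2))
      (fun bd => (bd.1.1 + 1 + bd.1.2, bd.1.1 + 1))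
      (by
        intro a b hab
        simp only [Prod.mk.injEq] at hab
        exact Subtype.ext (by ext <;> omega))
      (by
        rintro ⟨k, l⟩ hkl
        have h1 : nspF1 p x (k, l) ≠ 0 := hkl
        have hle : l ≤ k := by
          by_contra h
          exact h1 (by simp only [nspF1, if_neg h])
        have hk1 : 1 ≤ l := by
          by_contra h
          apply h1
          simp only [nspF1, if_pos hle, nspF, geomPMF]
          rw [if_neg h]
          ring
        have hpt : ((l - 1) + 1 + (k - l), (l - 1) + 1) = (k, l) := by
          ext <;> simp <;> omega
        have hmem : (fun bd : ℕ × ℕ =>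
            p ^ 2 * x ^ 2 * (((1 - p) ^ 2) ^ bd.1 * ((1 - p) * x) ^ bd.2)) (l - 1, k - l) ≠ 0 := by
          beta_reduce
          rw [← nspF1_eq p x (l - 1) (k - l), hpt]
          exact h1
        exact ⟨⟨(l - 1, k - l), hmem⟩, hpt⟩)
      (fun bd => nspF1_eq p x bd.1.1 bd.1.2)
    rw [hb, tsum_mul_left, tsum_prod_two_geom hq20 hq21 hqx0 hqx1]
  have hsum₂ : ∑' kl, nspF2 p x kl
      = p ^ 2 * x ^ 3 * (1 - p) * ((1 - (1 - p) ^ 2)⁻¹ * (1 - (1 - p) * x)⁻¹) := by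
    have hb := tsum_eq_tsum_of_ne_zero_bij (f := nspF2 p x)
      (g := fun bd : ℕ × ℕ =>
        p ^ 2 * x ^ 3 * (1 - p) * (((1 - p) ^ 2) ^ bd.1 * ((1 - p) * x) ^ bd.2))
      (fun bd => (bd.1.1 + 1, bd.1.1 + 2 + bd.1.2))
      (by
        intro a b hab
        simp only [Prod.mk.injEq] at hab
        exact Subtype.ext (by ext <;> omega))
      (by
        rintro ⟨k, l⟩ hkl
        have h1 : nspF2 p x (k, l) ≠ 0 := hkl
        have hlt : k < l := by
          by_contra h
          exact h1 (by simp only [nspF2, if_pos (by omega : l ≤ k)])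
        have hk1 : 1 ≤ k := by
          by_contra h
          apply h1
          simp only [nspF2, if_neg (by omega : ¬ l ≤ k), nspF, geomPMF]
          rw [if_neg h]
          ring
        have hpt : ((k - 1) + 1, (k - 1) + 2 + (l - k - 1)) = (k, l) := by
          ext <;> simp <;> omega
        have hmem : (fun bd : ℕ × ℕ =>
            p ^ 2 * x ^ 3 * (1 - p) * (((1 - p) ^ 2) ^ bd.1 * ((1 - p) * x) ^ bd.2))
            (k - 1, l - k - 1) ≠ 0 := by
          beta_reduce
          rw [← nspF2_eq p x (k - 1) (l - k - 1), hpt]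
          exact h1
        exact ⟨⟨(k - 1, l - k - 1), hmem⟩, hpt⟩)
      (fun bd => nspF2_eq p x bd.1.1 bd.1.2)
    rw [hb, tsum_mul_left, tsum_prod_two_geom hq20 hq21 hqx0 hqx1]
  rw [htot, hsum₁, hsum₂]
  have h2p : (2:ℝ) - p ≠ 0 := by linarith
  have hq2ne : 1 - (1 - p) ^ 2 ≠ 0 := by nlinarith
  have hqxne : 1 - (1 - p) * x ≠ 0 := by nlinarith
  have hqxne' : 1 - x * (1 - p) ≠ 0 := by nlinarith
  field_simp
  ring

lemma nsp_alg (p y : ℝ) (h2p : 2 - p ≠ 0) (hy : y ≠ 0)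
    (hd1 : 1 - y * (1 - p) ≠ 0) (hd2 : y⁻¹ - (1 - p) ≠ 0) :
    p / (2 - p) * y ^ 2 * (1 + y * (1 - p)) / (1 - y * (1 - p))
      = p / (2 - p) * y ^ 2 * ((1 - p) + y⁻¹) / (y⁻¹ - (1 - p)) := by
  rw [div_eq_div_iff hd1 hd2]
  linear_combination (p / (2 - p) * y ^ 2 * 2 * (1 - p)) * (mul_inv_cancel₀ hy)

/-- For independent geometric random variables `M₁, M₂` with success probability
`p ∈ (0,1]` and `x ∈ [0,1)`,
`E[x^(|M₁-M₂|+2)] = (p/(2-p))·x²·(1 + x·(1-p))/(1 - x·(1-p))`.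
With `x = e^(-T₀/t_c)` this equals
`(p/(2-p))·e^(-2T₀/t_c)·((1-p) + e^(T₀/t_c))/(e^(T₀/t_c) - (1-p))`,
the node-sends-photons (NSP) mean memory transmissivity. -/
theorem geometric_difference_expectation_NSP (p : ℝ) (hp0 : 0 < p) (hp1 : p ≤ 1)
    (x : ℝ) (hx0 : 0 ≤ x) (hx1 : x < 1) :
    (∑' k : ℕ, ∑' l : ℕ,
        geomPMF p k * geomPMF p l * x ^ (((k : ℤ) - (l : ℤ)).natAbs + 2))
      = (p / (2 - p)) * x ^ 2 * (1 + x * (1 - p)) / (1 - x * (1 - p))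
    ∧ (∀ T₀ tc : ℝ, 0 < T₀ → 0 < tc →
        (∑' k : ℕ, ∑' l : ℕ,
          geomPMF p k * geomPMF p l *
            Real.exp (-T₀ / tc) ^ (((k : ℤ) - (l : ℤ)).natAbs + 2))
        = (p / (2 - p)) * Real.exp (-2 * T₀ / tc) *
            ((1 - p) + Real.exp (T₀ / tc)) / (Real.exp (T₀ / tc) - (1 - p))) := by
  constructor
  · exact geom_diff_main p hp0 hp1 x hx0 hx1
  · intro T₀ tc hT htc
    have hd : 0 < T₀ / tc := div_pos hT htc
    have hy0 : 0 < Real.exp (-T₀ / tc) := Real.exp_pos _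
    have hy1 : Real.exp (-T₀ / tc) < 1 := by
      apply Real.exp_lt_one_iff.mpr ?_
      rw [neg_div]
      linarith
    rw [geom_diff_main p hp0 hp1 _ hy0.le hy1]
    have hE : Real.exp (T₀ / tc) = (Real.exp (-T₀ / tc))⁻¹ := by
      rw [← Real.exp_neg]
      congr 1
      ring
    have hexp2 : Real.exp (-2 * T₀ / tc) = Real.exp (-T₀ / tc) ^ 2 := by
      rw [← Real.exp_nat_mul]
      congr 1
      push_cast
      ring
    rw [hE, hexp2]
    have hden1 : 1 - Real.exp (-T₀ / tc) * (1 - p) ≠ 0 := by nlinarith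
    have hden2 : (Real.exp (-T₀ / tc))⁻¹ - (1 - p) ≠ 0 := by
      have h2 : 1 < (Real.exp (-T₀ / tc))⁻¹ := (one_lt_inv₀ hy0).mpr hy1
      nlinarith
    have h2p : (2:ℝ) - p ≠ 0 := by linarith
    exact nsp_alg p _ h2p hy0.ne' hden1 hden2
end
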